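/- In the SCP dynamic-programming setting, suppose index j+1 exists and blk(j+1) = blk(j) (i.e., S_{j+1} is not the first set of its block). Then for every W ⊆ α and every b ∈ {0,1,2}: OPT(W, j+1, b) = min( 2 + OPT(W \ S_{j+1}, j, 0), OPT(W, j, b) ), where arithmetic is in ℕ ∪ {∞} with 2 + ∞ = ∞. -/

import Mathlib

/-- `OPT S blk flag W j b` in the SCP dynamic-programming setting: the infimum, over all
index sets `X ⊆ {i : i ≤ j}` covering `W` and meeting every block `β_x` (`x ≤ blk j`)
whose (updated) flag is `2`, of `2|X|` plus the number of blocks `β_x` (`x ≤ blk j`)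
with (updated) flag `1` that `X` misses; here the flag of block `blk j` is overridden
to be `b`.  The value is `∞` if no such `X` exists. -/
noncomputable def OPT {α : Type*} [DecidableEq α] {m q : ℕ}
    (S : Fin m → Finset α) (blk : Fin m → Fin q) (flag : Fin q → ℕ)
    (W : Finset α) (j : Fin m) (b : ℕ) : ℕ∞ :=
  sInf { n : ℕ∞ | ∃ X : Finset (Fin m),
    (∀ i ∈ X, i ≤ j) ∧
    (W ⊆ X.biUnion S) ∧
    (∀ x : Fin q, x ≤ blk j → Function.update flag (blk j) b x = 2 →
      ∃ i ∈ X, blk i = x) ∧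
    n = 2 * (X.card : ℕ∞) +
      ((Finset.univ.filter (fun x : Fin q =>
        x ≤ blk j ∧ Function.update flag (blk j) b x = 1 ∧
          ∀ i ∈ X, blk i ≠ x)).card : ℕ∞) }

section helpers

variable {α : Type*} [DecidableEq α] {m q : ℕ}

lemma OPT_le (S : Fin m → Finset α) (blk : Fin m → Fin q) (flag : Fin q → ℕ)
    (W : Finset α) (j : Fin m) (b : ℕ) (X : Finset (Fin m))
    (h1 : ∀ i ∈ X, i ≤ j) (h2 : W ⊆ X.biUnion S)
    (h3 : ∀ x : Fin q, x ≤ blk j → Function.update flag (blk j) b x = 2 →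
      ∃ i ∈ X, blk i = x) :
    OPT S blk flag W j b ≤ 2 * (X.card : ℕ∞) +
      ((Finset.univ.filter (fun x : Fin q =>
        x ≤ blk j ∧ Function.update flag (blk j) b x = 1 ∧
          ∀ i ∈ X, blk i ≠ x)).card : ℕ∞) :=
  sInf_le ⟨X, h1, h2, h3, rfl⟩

lemma OPT_cases (S : Fin m → Finset α) (blk : Fin m → Fin q) (flag : Fin q → ℕ)
    (W : Finset α) (j : Fin m) (b : ℕ) :
    OPT S blk flag W j b = ⊤ ∨ ∃ X : Finset (Fin m),
      (∀ i ∈ X, i ≤ j) ∧ (W ⊆ X.biUnion S) ∧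
      (∀ x : Fin q, x ≤ blk j → Function.update flag (blk j) b x = 2 →
        ∃ i ∈ X, blk i = x) ∧
      OPT S blk flag W j b = 2 * (X.card : ℕ∞) +
        ((Finset.univ.filter (fun x : Fin q =>
          x ≤ blk j ∧ Function.update flag (blk j) b x = 1 ∧
            ∀ i ∈ X, blk i ≠ x)).card : ℕ∞) := by
  rcases Set.eq_empty_or_nonempty { n : ℕ∞ | ∃ X : Finset (Fin m),
      (∀ i ∈ X, i ≤ j) ∧
      (W ⊆ X.biUnion S) ∧
      (∀ x : Fin q, x ≤ blk j → Function.update flag (blk j) b x = 2 →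
        ∃ i ∈ X, blk i = x) ∧
      n = 2 * (X.card : ℕ∞) +
        ((Finset.univ.filter (fun x : Fin q =>
          x ≤ blk j ∧ Function.update flag (blk j) b x = 1 ∧
            ∀ i ∈ X, blk i ≠ x)).card : ℕ∞) } with h | h
  · left; rw [OPT, h, sInf_empty]
  · right
    obtain ⟨X, h1, h2, h3, h4⟩ := csInf_mem h
    exact ⟨X, h1, h2, h3, by rw [OPT]; exact h4⟩

end helpers

/-- SCP recurrence when `S_{j+1}` is not the first set of its block:
`OPT(W, j+1, b) = min(2 + OPT(W \\ S_{j+1}, j, 0), OPT(W, j, b))`. -/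
theorem scp_recurrence_same_block
    {α : Type*} [DecidableEq α] {m q : ℕ} (hm : 0 < m) (hq : 0 < q)
    (S : Fin m → Finset α) (blk : Fin m → Fin q)
    (hmono : Monotone blk) (hsurj : Function.Surjective blk)
    (flag : Fin q → ℕ) (hflag : ∀ x, flag x ≤ 2)
    (j j' : Fin m) (hj' : (j' : ℕ) = (j : ℕ) + 1) (hblk : blk j' = blk j)
    (W : Finset α) (b : ℕ) (hb : b ≤ 2) :
    OPT S blk flag W j' b =
      min (2 + OPT S blk flag (W \ S j') j 0) (OPT S blk flag W j b) := by
  have hjle : j ≤ j' := by rw [Fin.le_def]; omega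
  have hjne : ∀ i : Fin m, i ≤ j' → i ≠ j' → i ≤ j := by
    intro i h hne
    rw [Fin.le_def] at h ⊢
    have : (i : ℕ) ≠ (j' : ℕ) := fun hval => hne (Fin.ext hval)
    omega
  have hj'nle : ∀ i : Fin m, i ≤ j → i ≠ j' := by
    intro i h hne
    rw [Fin.le_def] at h
    rw [hne] at h
    omega
  apply le_antisymm
  · apply le_min
    · -- OPT(W,j',b) ≤ 2 + OPT(W \ S j', j, 0)
      rcases OPT_cases S blk flag (W \ S j') j 0 with h | ⟨X, h1, h2, h3, h4⟩
      · simp [h]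
      · have hj'X : j' ∉ X := fun hmem => hj'nle j' (h1 j' hmem) rfl
        have key := OPT_le S blk flag W j' b (insert j' X)
          (by
            intro i hi
            rcases Finset.mem_insert.mp hi with rfl | hi
            · exact le_refl _
            · exact le_trans (h1 i hi) hjle)
          (by
            intro w hw
            by_cases hwS : w ∈ S j'
            · exact Finset.mem_biUnion.mpr ⟨j', Finset.mem_insert_self _ _, hwS⟩
            · obtain ⟨i, hi, hwi⟩ := Finset.mem_biUnion.mp
                (h2 (Finset.mem_sdiff.mpr ⟨hw, hwS⟩))
              exact Finset.mem_biUnion.mpr ⟨i, Finset.mem_insert_of_mem hi, hwi⟩)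
          (by
            intro x hx hfx
            rw [hblk] at hx hfx
            by_cases hxj : x = blk j
            · exact ⟨j', Finset.mem_insert_self _ _, by rw [hblk, hxj]⟩
            · have hfx' : flag x = 2 := by
                rwa [Function.update_of_ne hxj] at hfx
              obtain ⟨i, hi, hix⟩ := h3 x hx (by rw [Function.update_of_ne hxj]; exact hfx')
              exact ⟨i, Finset.mem_insert_of_mem hi, hix⟩)
        refine le_trans key ?_
        rw [h4]
        have hfilter :
            (Finset.univ.filter (fun x : Fin q =>
              x ≤ blk j' ∧ Function.update flag (blk j') b x = 1 ∧
                ∀ i ∈ insert j' X, blk i ≠ x)) =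
            (Finset.univ.filter (fun x : Fin q =>
              x ≤ blk j ∧ Function.update flag (blk j) 0 x = 1 ∧
                ∀ i ∈ X, blk i ≠ x)) := by
          apply Finset.filter_congr
          intro x _
          rw [hblk]
          by_cases hxj : x = blk j
          · subst hxj
            constructor
            · rintro ⟨-, -, h⟩
              exact absurd hblk (h j' (Finset.mem_insert_self _ _))
            · rintro ⟨-, h, -⟩
              rw [Function.update_self] at h
              exact absurd h (by norm_num)
          · rw [Function.update_of_ne hxj, Function.update_of_ne hxj]
            constructor
            · rintro ⟨ha, hc, hd⟩
              exact ⟨ha, hc, fun i hi => hd i (Finset.mem_insert_of_mem hi)⟩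
            · rintro ⟨ha, hc, hd⟩
              refine ⟨ha, hc, fun i hi => ?_⟩
              rcases Finset.mem_insert.mp hi with rfl | hi
              · rw [hblk]; exact hxj ∘ Eq.symm
              · exact hd i hi
        rw [hfilter, Finset.card_insert_of_notMem hj'X]
        push_cast
        ring_nf
        rfl
    · -- OPT(W,j',b) ≤ OPT(W,j,b)
      rcases OPT_cases S blk flag W j b with h | ⟨X, h1, h2, h3, h4⟩
      · simp [h]
      · have key := OPT_le S blk flag W j' b X
          (fun i hi => le_trans (h1 i hi) hjle) h2
          (by
            intro x hx hfx
            rw [hblk] at hx hfx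
            exact h3 x hx hfx)
        refine le_trans key ?_
        rw [h4]
        apply le_of_eq
        have hf : (Finset.univ.filter (fun x : Fin q =>
              x ≤ blk j' ∧ Function.update flag (blk j') b x = 1 ∧
                ∀ i ∈ X, blk i ≠ x)) =
            (Finset.univ.filter (fun x : Fin q =>
              x ≤ blk j ∧ Function.update flag (blk j) b x = 1 ∧
                ∀ i ∈ X, blk i ≠ x)) := by
          apply Finset.filter_congr
          intro x _
          rw [hblk]
        rw [hf]
  · -- min(...) ≤ OPT(W,j',b)
    rw [OPT]
    apply le_sInf
    rintro n ⟨X, h1, h2, h3, rfl⟩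
    by_cases hj'X : j' ∈ X
    · refine le_trans (min_le_left _ _) ?_
      set X₀ := X.erase j' with hX₀
      have key := OPT_le S blk flag (W \ S j') j 0 X₀
        (by
          intro i hi
          exact hjne i (h1 i (Finset.mem_of_mem_erase hi)) (Finset.ne_of_mem_erase hi))
        (by
          intro w hw
          obtain ⟨hwW, hwS⟩ := Finset.mem_sdiff.mp hw
          obtain ⟨i, hi, hwi⟩ := Finset.mem_biUnion.mp (h2 hwW)
          have : i ≠ j' := fun h => hwS (h ▸ hwi)
          exact Finset.mem_biUnion.mpr ⟨i, Finset.mem_erase.mpr ⟨this, hi⟩, hwi⟩)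
        (by
          intro x hx hfx
          by_cases hxj : x = blk j
          · rw [hxj, Function.update_self] at hfx
            exact absurd hfx (by norm_num)
          · rw [Function.update_of_ne hxj] at hfx
            obtain ⟨i, hi, hix⟩ := h3 x (by rw [hblk]; exact hx)
              (by rw [hblk, Function.update_of_ne hxj]; exact hfx)
            have : i ≠ j' := by
              rintro rfl
              exact hxj (hix.symm.trans hblk)
            exact ⟨i, Finset.mem_erase.mpr ⟨this, hi⟩, hix⟩)
      refine le_trans (add_le_add_right key 2) (le_of_eq ?_)
      have hfilter :
          (Finset.univ.filter (fun x : Fin q =>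
            x ≤ blk j ∧ Function.update flag (blk j) 0 x = 1 ∧
              ∀ i ∈ X₀, blk i ≠ x)) =
          (Finset.univ.filter (fun x : Fin q =>
            x ≤ blk j' ∧ Function.update flag (blk j') b x = 1 ∧
              ∀ i ∈ X, blk i ≠ x)) := by
        apply Finset.filter_congr
        intro x _
        rw [hblk]
        by_cases hxj : x = blk j
        · subst hxj
          constructor
          · rintro ⟨-, h, -⟩
            rw [Function.update_self] at h
            exact absurd h (by norm_num)
          · rintro ⟨-, -, h⟩
            exact absurd hblk (h j' hj'X)
        · rw [Function.update_of_ne hxj, Function.update_of_ne hxj]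
          constructor
          · rintro ⟨ha, hc, hd⟩
            refine ⟨ha, hc, fun i hi => ?_⟩
            by_cases hij : i = j'
            · subst hij; rw [hblk]; exact hxj ∘ Eq.symm
            · exact hd i (Finset.mem_erase.mpr ⟨hij, hi⟩)
          · rintro ⟨ha, hc, hd⟩
            exact ⟨ha, hc, fun i hi => hd i (Finset.mem_of_mem_erase hi)⟩
      rw [hfilter]
      have hcard : X.card = X₀.card + 1 := by
        rw [hX₀, Finset.card_erase_of_mem hj'X]
        have : 0 < X.card := Finset.card_pos.mpr ⟨j', hj'X⟩
        omega
      rw [hcard]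
      push_cast
      ring
    · refine le_trans (min_le_right _ _) ?_
      have key := OPT_le S blk flag W j b X
        (fun i hi => hjne i (h1 i hi) (fun h => hj'X (h ▸ hi))) h2
        (by
          intro x hx hfx
          exact h3 x (by rw [hblk]; exact hx)
            (by rw [hblk]; exact hfx))
      refine le_trans key (le_of_eq ?_)
      have hf : (Finset.univ.filter (fun x : Fin q =>
            x ≤ blk j ∧ Function.update flag (blk j) b x = 1 ∧
              ∀ i ∈ X, blk i ≠ x)) =
          (Finset.univ.filter (fun x : Fin q =>
            x ≤ blk j' ∧ Function.update flag (blk j') b x = 1 ∧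
              ∀ i ∈ X, blk i ≠ x)) := by
        apply Finset.filter_congr
        intro x _
        rw [hblk]
      rw [hf]
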